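/- For the inverse Sibuya process L_α, the probability mass function is P(L_α(t) = m) = ∑_{r=0}^{m} (-1)^r binom(m, r) binom(t - αr - α, t) for all t, m ∈ ℕ_0. -/

import Mathlib

open MeasureTheory ProbabilityTheory

/-- Generalized binomial coefficient `binom(x, k) = x(x-1)⋯(x-k+1)/k!` for real `x`. -/
noncomputable def gbinom (x : ℝ) (k : ℕ) : ℝ :=
  (∏ i ∈ Finset.range k, (x - i)) / (Nat.factorial k)

/-- Sibuya(α) probability mass function. -/
noncomputable def sibuya (α : ℝ) (k : ℕ) : ℝ :=
  if k = 0 then 0 else (-1 : ℝ) ^ (k - 1) * gbinom α k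

lemma gbinom_zero (x : ℝ) : gbinom x 0 = 1 := by simp [gbinom]

lemma gbinom_succ' (x : ℝ) (j : ℕ) :
    ((j : ℝ) + 1) * gbinom x (j + 1) = x * gbinom (x - 1) j := by
  have hfac : (Nat.factorial j : ℝ) ≠ 0 := by positivity
  have hprod : ∏ i ∈ Finset.range (j + 1), (x - i) =
      x * ∏ i ∈ Finset.range j, (x - 1 - i) := by
    rw [Finset.prod_range_succ']
    simp only [Nat.cast_zero, sub_zero]
    rw [mul_comm]
    congr 1
    apply Finset.prod_congr rfl
    intro i _
    push_cast
    ring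
  rw [gbinom, gbinom, Nat.factorial_succ, hprod]
  push_cast
  field_simp

lemma gbinom_nat_self (t : ℕ) : gbinom (t : ℝ) t = 1 := by
  induction t with
  | zero => simp [gbinom]
  | succ n ih =>
    have hne : ((n : ℝ) + 1) ≠ 0 := by positivity
    have h := gbinom_succ' ((n : ℝ) + 1) n
    have h2 : ((n : ℝ) + 1 - 1) = (n : ℝ) := by ring
    rw [h2, ih, mul_one] at h
    have h' : ((n : ℝ) + 1) * gbinom ((n : ℝ) + 1) (n + 1) = ((n : ℝ) + 1) * 1 := by
      rw [mul_one]; exact h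
    have := mul_left_cancel₀ hne h'
    simpa [Nat.cast_succ] using this

lemma gbinom_reflect (x : ℝ) (n : ℕ) :
    gbinom ((n : ℝ) - 1 - x) n = (-1 : ℝ) ^ n * gbinom x n := by
  unfold gbinom
  rw [mul_div_assoc', mul_comm ((-1:ℝ)^n)]
  congr 1
  have hrefl := Finset.prod_range_reflect (fun i => (n : ℝ) - 1 - x - i) n
  rw [← hrefl]
  have h1 : ∀ j ∈ Finset.range n, (n : ℝ) - 1 - x - ((n - 1 - j : ℕ) : ℝ) = (-1) * (x - j) := by
    intro j hj
    rw [Finset.mem_range] at hj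
    have hj1 : j ≤ n - 1 := by omega
    have hn1 : 1 ≤ n := by omega
    rw [Nat.cast_sub hj1, Nat.cast_sub hn1]
    push_cast
    ring
  rw [Finset.prod_congr rfl h1, Finset.prod_mul_distrib, Finset.prod_const, Finset.card_range]
  ring

lemma gbinom_vandermonde (k : ℕ) :
    ∀ x y : ℝ, ∑ j ∈ Finset.range (k + 1), gbinom x j * gbinom y (k - j)
      = gbinom (x + y) k := by
  induction k with
  | zero => intro x y; simp [gbinom]
  | succ k ih =>
    intro x y
    have hk1 : ((k : ℝ) + 1) ≠ 0 := by positivity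
    apply mul_left_cancel₀ hk1
    rw [Finset.mul_sum]
    have hterm : ∀ j ∈ Finset.range (k + 2),
        ((k : ℝ) + 1) * (gbinom x j * gbinom y (k + 1 - j))
          = (j : ℝ) * gbinom x j * gbinom y (k + 1 - j)
            + ((k + 1 - j : ℕ) : ℝ) * gbinom y (k + 1 - j) * gbinom x j := by
      intro j hj
      rw [Finset.mem_range] at hj
      have : ((k + 1 - j : ℕ) : ℝ) = (k : ℝ) + 1 - j := by
        rw [Nat.cast_sub (by omega)]; push_cast; ring
      rw [this]; ring
    rw [Finset.sum_congr rfl hterm, Finset.sum_add_distrib]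
    have hA : ∑ j ∈ Finset.range (k + 2), (j : ℝ) * gbinom x j * gbinom y (k + 1 - j)
        = x * gbinom (x - 1 + y) k := by
      rw [Finset.sum_range_succ']
      have hc : ∀ i ∈ Finset.range (k + 1),
          ((i + 1 : ℕ) : ℝ) * gbinom x (i + 1) * gbinom y (k + 1 - (i + 1))
            = x * (gbinom (x - 1) i * gbinom y (k - i)) := by
        intro i hi
        have h1 : k + 1 - (i + 1) = k - i := by omega
        have h2 : ((i + 1 : ℕ) : ℝ) = (i : ℝ) + 1 := by push_cast; ring
        rw [h1, h2, mul_assoc, ← mul_assoc ((i:ℝ)+1), gbinom_succ' x i]; ring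
      rw [Finset.sum_congr rfl hc, ← Finset.mul_sum, ih]
      simp
    have hB : ∑ j ∈ Finset.range (k + 2), ((k + 1 - j : ℕ) : ℝ) * gbinom y (k + 1 - j) * gbinom x j
        = y * gbinom (x + (y - 1)) k := by
      rw [Finset.sum_range_succ]
      have hc : ∀ j ∈ Finset.range (k + 1),
          ((k + 1 - j : ℕ) : ℝ) * gbinom y (k + 1 - j) * gbinom x j
            = y * (gbinom x j * gbinom (y - 1) (k - j)) := by
        intro j hj
        rw [Finset.mem_range] at hj
        have h1 : k + 1 - j = (k - j) + 1 := by omega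
        have h2 : ((k - j + 1 : ℕ) : ℝ) = ((k - j : ℕ) : ℝ) + 1 := by
          push_cast; ring
        rw [h1, h2, gbinom_succ' y (k - j)]
        ring
      rw [Finset.sum_congr rfl hc, ← Finset.mul_sum, ih]
      simp
    rw [hA, hB]
    have h3 : x - 1 + y = x + y - 1 := by ring
    have h4 : x + (y - 1) = x + y - 1 := by ring
    rw [h3, h4, ← add_mul, ← gbinom_succ' (x + y) k]

lemma pascal_sum (n : ℕ) (f : ℕ → ℝ) :
    ∑ r ∈ Finset.range (n + 2), (-1:ℝ)^r * ((n+1).choose r : ℝ) * f r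
      = ∑ r ∈ Finset.range (n + 1), (-1:ℝ)^r * (n.choose r : ℝ) * f r
        - ∑ r ∈ Finset.range (n + 1), (-1:ℝ)^r * (n.choose r : ℝ) * f (r + 1) := by
  set A := ∑ r ∈ Finset.range (n + 1), (-1:ℝ)^r * (n.choose r : ℝ) * f r with hAdef
  set B := ∑ r ∈ Finset.range (n + 1), (-1:ℝ)^r * (n.choose r : ℝ) * f (r + 1) with hBdef
  set C := ∑ r ∈ Finset.range (n + 1), (-1:ℝ)^r * (n.choose (r+1) : ℝ) * f (r + 1) with hCdef
  have hC : C = f 0 - A := by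
    have h1 : ∑ r ∈ Finset.range (n + 2), (-1:ℝ)^r * (n.choose r : ℝ) * f r = A := by
      rw [Finset.sum_range_succ, hAdef]
      simp [Nat.choose_succ_self]
    have h2 : ∑ r ∈ Finset.range (n + 2), (-1:ℝ)^r * (n.choose r : ℝ) * f r
        = -C + f 0 := by
      rw [Finset.sum_range_succ']
      simp only [pow_zero, Nat.choose_zero_right, Nat.cast_one, one_mul]
      congr 1
      rw [hCdef, ← Finset.sum_neg_distrib]
      exact Finset.sum_congr rfl fun r _ => by rw [pow_succ]; ring
    rw [h1] at h2
    linarith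
  rw [Finset.sum_range_succ']
  simp only [pow_zero, Nat.choose_zero_right, Nat.cast_one, one_mul]
  have h3 : ∀ r ∈ Finset.range (n+1), (-1:ℝ)^(r+1) * ((n+1).choose (r+1) : ℝ) * f (r+1)
      = -((-1:ℝ)^r * (n.choose r : ℝ) * f (r+1)) + -((-1:ℝ)^r * (n.choose (r+1) : ℝ) * f (r+1)) := by
    intro r _
    rw [Nat.choose_succ_succ, pow_succ]
    push_cast
    ring
  rw [Finset.sum_congr rfl h3, Finset.sum_add_distrib, Finset.sum_neg_distrib,
    Finset.sum_neg_distrib, ← hBdef, ← hCdef, hC]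
  ring

lemma sibuya_conv (α β : ℝ) (t : ℕ) :
    ∑ k ∈ Finset.range (t + 1), sibuya α k * ((-1:ℝ)^(t-k) * gbinom (β - 1) (t - k))
      = (-1:ℝ)^t * (gbinom (β - 1) t - gbinom (α + β - 1) t) := by
  have hterm : ∀ k ∈ Finset.range (t + 1), sibuya α k * ((-1:ℝ)^(t-k) * gbinom (β-1) (t-k))
      = (-1:ℝ)^(k+1) * gbinom α k * ((-1:ℝ)^(t-k) * gbinom (β-1) (t-k))
        + (if k = 0 then (-1:ℝ)^t * gbinom (β-1) t else 0) := by
    intro k _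
    cases k with
    | zero =>
      simp [sibuya, gbinom_zero]
    | succ k' =>
      simp only [sibuya, Nat.succ_ne_zero, if_false, Nat.succ_sub_one]
      rw [pow_succ]
      ring
  rw [Finset.sum_congr rfl hterm, Finset.sum_add_distrib]
  have hif : ∑ k ∈ Finset.range (t+1), (if k = 0 then (-1:ℝ)^t * gbinom (β-1) t else 0)
      = (-1:ℝ)^t * gbinom (β-1) t := by
    rw [Finset.sum_ite_eq' (Finset.range (t+1)) 0 (fun _ => (-1:ℝ)^t * gbinom (β-1) t)]
    simp
  have hmain : ∑ k ∈ Finset.range (t+1),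
      (-1:ℝ)^(k+1) * gbinom α k * ((-1:ℝ)^(t-k) * gbinom (β-1) (t-k))
      = -((-1:ℝ)^t * gbinom (α + (β-1)) t) := by
    have hc : ∀ k ∈ Finset.range (t+1),
        (-1:ℝ)^(k+1) * gbinom α k * ((-1:ℝ)^(t-k) * gbinom (β-1) (t-k))
          = -((-1:ℝ)^t * (gbinom α k * gbinom (β-1) (t-k))) := by
      intro k hk
      rw [Finset.mem_range] at hk
      have hsgn : (-1:ℝ)^(k+1) * (-1:ℝ)^(t-k) = -(-1:ℝ)^t := by
        rw [← pow_add]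
        have he : k + 1 + (t - k) = t + 1 := by omega
        rw [he, pow_succ]
        ring
      calc (-1:ℝ)^(k+1) * gbinom α k * ((-1:ℝ)^(t-k) * gbinom (β-1) (t-k))
          = ((-1:ℝ)^(k+1) * (-1:ℝ)^(t-k)) * (gbinom α k * gbinom (β-1) (t-k)) := by ring
        _ = -((-1:ℝ)^t * (gbinom α k * gbinom (β-1) (t-k))) := by rw [hsgn]; ring
    rw [Finset.sum_congr rfl hc, Finset.sum_neg_distrib, ← Finset.mul_sum,
      gbinom_vandermonde t α (β-1)]
  rw [hmain, hif]
  ring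

lemma conv_step (α β : ℝ) (t : ℕ) :
    ∑ k ∈ Finset.range (t + 1), sibuya α k * gbinom ((t:ℝ) - (k:ℝ) - β) (t - k)
      = gbinom ((t:ℝ) - β) t - gbinom ((t:ℝ) - β - α) t := by
  have h1 : ∀ k ∈ Finset.range (t+1), sibuya α k * gbinom ((t:ℝ) - (k:ℝ) - β) (t - k)
      = sibuya α k * ((-1:ℝ)^(t-k) * gbinom (β - 1) (t - k)) := by
    intro k hk
    rw [Finset.mem_range] at hk
    congr 1
    rw [← gbinom_reflect (β-1) (t-k)]
    congr 1
    rw [Nat.cast_sub (by omega : k ≤ t)]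
    ring
  have h2 : gbinom ((t:ℝ) - β) t = (-1:ℝ)^t * gbinom (β-1) t := by
    rw [← gbinom_reflect (β-1) t]
    congr 1
    ring
  have h3 : gbinom ((t:ℝ) - β - α) t = (-1:ℝ)^t * gbinom (α + β - 1) t := by
    rw [← gbinom_reflect (α+β-1) t]
    congr 1
    ring
  rw [Finset.sum_congr rfl h1, sibuya_conv α β t, h2, h3]
  ring

lemma formula_step (α : ℝ) (n t : ℕ) :
    ∑ k ∈ Finset.range (t + 1), sibuya α k *
        ∑ r ∈ Finset.range (n + 1), (-1:ℝ)^r * (n.choose r : ℝ) * gbinom (((t - k : ℕ) : ℝ) - α * r) (t - k)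
      = ∑ r ∈ Finset.range (n + 2), (-1:ℝ)^r * ((n+1).choose r : ℝ) * gbinom ((t:ℝ) - α * r) t := by
  have step1 : ∀ k ∈ Finset.range (t+1),
      (sibuya α k * ∑ r ∈ Finset.range (n + 1), (-1:ℝ)^r * (n.choose r : ℝ) * gbinom (((t-k:ℕ):ℝ) - α*r) (t-k))
      = ∑ r ∈ Finset.range (n + 1), (-1:ℝ)^r * (n.choose r : ℝ) * (sibuya α k * gbinom ((t:ℝ) - (k:ℝ) - α*r) (t-k)) := by
    intro k hk
    rw [Finset.mem_range] at hk
    rw [Finset.mul_sum]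
    refine Finset.sum_congr rfl fun r _ => ?_
    have hc : ((t - k : ℕ) : ℝ) = (t:ℝ) - (k:ℝ) := by
      rw [Nat.cast_sub (by omega)]
    rw [hc]
    ring
  rw [Finset.sum_congr rfl step1, Finset.sum_comm]
  have step2 : ∀ r ∈ Finset.range (n+1),
      ∑ k ∈ Finset.range (t+1), (-1:ℝ)^r * (n.choose r : ℝ) * (sibuya α k * gbinom ((t:ℝ) - (k:ℝ) - α*r) (t-k))
      = (-1:ℝ)^r * (n.choose r : ℝ) * (gbinom ((t:ℝ) - α*r) t - gbinom ((t:ℝ) - α*r - α) t) := by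
    intro r _
    rw [← Finset.mul_sum, conv_step α (α*r) t]
  rw [Finset.sum_congr rfl step2]
  have step3 :
      ∑ r ∈ Finset.range (n+1), (-1:ℝ)^r * (n.choose r : ℝ) * (gbinom ((t:ℝ) - α*r) t - gbinom ((t:ℝ) - α*r - α) t)
      = ∑ r ∈ Finset.range (n+1), (-1:ℝ)^r * (n.choose r : ℝ) * gbinom ((t:ℝ) - α*r) t
        - ∑ r ∈ Finset.range (n+1), (-1:ℝ)^r * (n.choose r : ℝ) * gbinom ((t:ℝ) - α*((r+1:ℕ):ℝ)) t := by
    rw [← Finset.sum_sub_distrib]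
    refine Finset.sum_congr rfl fun r _ => ?_
    have hc : (t:ℝ) - α*((r+1:ℕ):ℝ) = (t:ℝ) - α*r - α := by push_cast; ring
    rw [hc]
    ring
  rw [step3]
  exact (pascal_sum n (fun r => gbinom ((t:ℝ) - α*r) t)).symm


/-- For the inverse Sibuya process `L_α`, the probability mass function is
`P(L_α(t) = m) = ∑_{r=0}^{m} (-1)^r binom(m, r) binom(t - αr - α, t)` for all `t, m ∈ ℕ`. -/
theorem sibuya_inverse_pmf
    {Ω : Type*} [MeasurableSpace Ω] (μ : Measure Ω) [IsProbabilityMeasure μ]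
    (α : ℝ) (hα : α ∈ Set.Ioo (0 : ℝ) 1)
    (Z : ℕ → Ω → ℕ) (hmeas : ∀ i, Measurable (Z i))
    (hindep : iIndepFun Z μ)
    (hlaw : ∀ i k, (μ {ω | Z i ω = k}).toReal = sibuya α k)
    (S : ℕ → Ω → ℕ) (hS : ∀ n ω, S n ω = ∑ j ∈ Finset.range n, Z j ω)
    (L : ℕ → Ω → ℕ) (hL : ∀ t ω, L t ω = sSup {n : ℕ | S n ω ≤ t})
    (t m : ℕ) :
    (μ {ω | L t ω = m}).toReal
      = ∑ r ∈ Finset.range (m + 1),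
          (-1 : ℝ) ^ r * (m.choose r) * gbinom ((t : ℝ) - α * r - α) t := by
  classical
  -- basic facts about S
  have hsucc : ∀ n ω, S (n+1) ω = S n ω + Z n ω := by
    intro n ω
    rw [hS (n+1) ω, hS n ω, Finset.sum_range_succ]
  have hSmeas : ∀ n, Measurable (fun ω => S n ω) := by
    intro n
    have h : (fun ω => S n ω) = fun ω => ∑ j ∈ Finset.range n, Z j ω := by
      funext ω; exact hS n ω
    rw [h]
    exact Finset.measurable_sum _ (fun i _ => hmeas i)
  have hEmeas : ∀ n u, MeasurableSet {ω | S n ω ≤ u} := by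
    intro n u
    exact hSmeas n (MeasurableSet.of_discrete (s := Set.Iic u))
  -- base case
  have hF0 : ∀ u : ℕ, (μ {ω | S 0 ω ≤ u}).toReal = 1 := by
    intro u
    have h : {ω | S 0 ω ≤ u} = Set.univ := by
      ext ω
      simp [hS 0 ω]
    rw [h, measure_univ]
    simp
  -- recurrence
  have hFrec : ∀ n u, (μ {ω | S (n+1) ω ≤ u}).toReal
      = ∑ k ∈ Finset.range (u+1), sibuya α k * (μ {ω | S n ω ≤ u - k}).toReal := by
    intro n u
    have hset : {ω | S (n+1) ω ≤ u}
        = ⋃ k ∈ Finset.range (u+1), ({ω | Z n ω = k} ∩ {ω | S n ω ≤ u - k}) := by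
      ext ω
      simp only [Set.mem_setOf_eq, Set.mem_iUnion, Finset.mem_range, Set.mem_inter_iff,
        exists_prop]
      rw [hsucc n ω]
      constructor
      · intro h
        exact ⟨Z n ω, by omega, rfl, by omega⟩
      · rintro ⟨k, hk, hZ, hSn⟩
        omega
    have hdisj : (↑(Finset.range (u+1)) : Set ℕ).PairwiseDisjoint
        (fun k => ({ω | Z n ω = k} ∩ {ω | S n ω ≤ u - k})) := by
      intro a _ b _ hab
      refine Set.disjoint_left.mpr ?_
      rintro ω ⟨ha, -⟩ ⟨hb, -⟩
      exact hab (ha.symm.trans hb)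
    have hmeasb : ∀ k ∈ Finset.range (u+1),
        MeasurableSet ({ω | Z n ω = k} ∩ {ω | S n ω ≤ u - k}) := by
      intro k _
      exact ((hmeas n) (MeasurableSet.of_discrete (s := {k}))).inter (hEmeas n (u-k))
    have hind : IndepFun (∑ j ∈ Finset.range n, Z j) (Z n) μ :=
      hindep.indepFun_sum_range_succ hmeas n
    have hprod : ∀ k, μ ({ω | Z n ω = k} ∩ {ω | S n ω ≤ u - k})
        = μ {ω | Z n ω = k} * μ {ω | S n ω ≤ u - k} := by
      intro k
      have h1 : {ω | Z n ω = k} = (Z n) ⁻¹' {k} := rfl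
      have h2 : {ω | S n ω ≤ u - k} = (∑ j ∈ Finset.range n, Z j) ⁻¹' (Set.Iic (u-k)) := by
        ext ω
        simp only [Set.mem_setOf_eq, Set.mem_preimage, Set.mem_Iic, Finset.sum_apply]
        rw [hS n ω]
      have := hind.measure_inter_preimage_eq_mul (Set.Iic (u-k)) {k}
        (MeasurableSet.of_discrete) (MeasurableSet.of_discrete)
      rw [h1, h2, Set.inter_comm, this, mul_comm]
    rw [hset, measure_biUnion_finset hdisj hmeasb]
    have hnt : ∀ k ∈ Finset.range (u+1), μ ({ω | Z n ω = k} ∩ {ω | S n ω ≤ u - k}) ≠ ⊤ :=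
      fun k _ => measure_ne_top μ _
    rw [ENNReal.toReal_sum hnt]
    refine Finset.sum_congr rfl fun k _ => ?_
    rw [hprod k, ENNReal.toReal_mul, hlaw n k]
  -- closed formula
  have hFform : ∀ n u, (μ {ω | S n ω ≤ u}).toReal
      = ∑ r ∈ Finset.range (n+1), (-1:ℝ)^r * (n.choose r : ℝ) * gbinom ((u:ℝ) - α * r) u := by
    intro n
    induction n with
    | zero =>
      intro u
      rw [hF0 u]
      simp [gbinom_nat_self u]
    | succ n ih =>
      intro u
      rw [hFrec n u]
      rw [← formula_step α n u]
      exact Finset.sum_congr rfl fun k _ => by rw [ih (u-k)]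
  -- null set where some Z is zero
  set N : Set Ω := ⋃ i, {ω | Z i ω = 0} with hNdef
  have hN : μ N = 0 := by
    refine measure_iUnion_null fun i => ?_
    have h0 := hlaw i 0
    rw [show sibuya α 0 = 0 from if_pos rfl] at h0
    rcases (ENNReal.toReal_eq_zero_iff _).mp h0 with h | h
    · exact h
    · exact absurd h (measure_ne_top μ _)
  -- event identification
  set E : Set Ω := {ω | S m ω ≤ t} with hEdef
  set E' : Set Ω := {ω | S (m+1) ω ≤ t} with hE'def
  have hsubE : E' ⊆ E := by
    intro ω h
    simp only [hEdef, hE'def, Set.mem_setOf_eq] at *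
    have := hsucc m ω
    omega
  have hiff : ∀ ω, ω ∉ N → (L t ω = m ↔ ω ∈ E \ E') := by
    intro ω hωN
    have hzero : ∀ i, Z i ω ≠ 0 := by
      intro i hi
      exact hωN (Set.mem_iUnion.mpr ⟨i, hi⟩)
    have hmono : ∀ a b, a ≤ b → S a ω ≤ S b ω := by
      intro a b hab
      rw [hS a ω, hS b ω]
      exact Finset.sum_le_sum_of_subset (Finset.range_subset_range.mpr hab)
    have hge : ∀ n, n ≤ S n ω := by
      intro n
      rw [hS n ω]
      calc n = ∑ _j ∈ Finset.range n, 1 := by simp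
        _ ≤ ∑ j ∈ Finset.range n, Z j ω :=
          Finset.sum_le_sum fun j _ => Nat.one_le_iff_ne_zero.mpr (hzero j)
    have hbdd : BddAbove {n | S n ω ≤ t} := ⟨t, fun n hn => le_trans (hge n) hn⟩
    have hne : Set.Nonempty {n | S n ω ≤ t} := ⟨0, by simp [Set.mem_setOf_eq, hS 0 ω]⟩
    rw [hL t ω]
    constructor
    · intro hLm
      have hmem := Nat.sSup_mem hne hbdd
      rw [hLm] at hmem
      refine ⟨hmem, fun hcon => ?_⟩
      have hle : m + 1 ≤ sSup {n | S n ω ≤ t} := le_csSup hbdd hcon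
      omega
    · rintro ⟨hE1, hE2⟩
      apply le_antisymm
      · refine csSup_le hne fun n hn => ?_
        by_contra hlt
        push_neg at hlt
        exact hE2 (le_trans (hmono (m+1) n hlt) hn)
      · exact le_csSup hbdd hE1
  have hμL : μ {ω | L t ω = m} = μ (E \ E') := by
    apply measure_congr
    rw [ae_eq_set]
    constructor
    · refine measure_mono_null ?_ hN
      intro ω hω
      by_contra hωN
      exact hω.2 ((hiff ω hωN).mp hω.1)
    · refine measure_mono_null ?_ hN
      intro ω hω
      by_contra hωN
      exact hω.2 ((hiff ω hωN).mpr hω.1)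
  have hμdiff : μ (E \ E') = μ E - μ E' :=
    measure_diff hsubE (hEmeas (m+1) t).nullMeasurableSet (measure_ne_top μ E')
  have hkey : (μ {ω | L t ω = m}).toReal = (μ E).toReal - (μ E').toReal := by
    rw [hμL, hμdiff, ENNReal.toReal_sub_of_le (measure_mono hsubE) (measure_ne_top μ E)]
  rw [hkey, hFform m t, hFform (m+1) t,
    pascal_sum m (fun r => gbinom ((t:ℝ) - α * r) t)]
  have hfin : ∀ r : ℕ, gbinom ((t:ℝ) - α * ((r+1:ℕ):ℝ)) t = gbinom ((t:ℝ) - α * r - α) t := by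
    intro r
    congr 1
    push_cast
    ring
  have : ∑ r ∈ Finset.range (m+1), (-1:ℝ)^r * (m.choose r : ℝ) * gbinom ((t:ℝ) - α * ((r+1:ℕ):ℝ)) t
      = ∑ r ∈ Finset.range (m+1), (-1:ℝ)^r * (m.choose r : ℝ) * gbinom ((t:ℝ) - α * r - α) t := by
    exact Finset.sum_congr rfl fun r _ => by rw [hfin r]
  rw [this]
  ring
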